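/- Let v ∈ ℝ^n with v_i ≥ 0 for all i, let t ∈ ℝ with 0 ≤ t and ⌊t⌋ < n, and let σ be a permutation of {1,…,n} such that v_{σ(1)} ≥ v_{σ(2)} ≥ … ≥ v_{σ(n)} (a decreasing rearrangement of v). Then sup { Σ_{i=1}^n v_i z_i : z ∈ [0,1]^n, Σ_{i=1}^n z_i ≤ t } = Σ_{j=1}^{⌊t⌋} v_{σ(j)} + (t − ⌊t⌋)·v_{σ(⌊t⌋+1)}. -/

import Mathlib

/-- for a fractional budget `t`, the maximum of `Σ v_i z_i` over the
budgeted box equals the sum of the `⌊t⌋` largest entries plus the fractional part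
times the `(⌊t⌋+1)`-st largest entry. -/
theorem stmt5 (n : ℕ) (hn : 1 ≤ n) (v : Fin n → ℝ) (hv : ∀ i, 0 ≤ v i)
    (t : ℝ) (ht : 0 ≤ t) (hfloor : ⌊t⌋₊ < n)
    (σ : Equiv.Perm (Fin n)) (hσ : ∀ i j : Fin n, i ≤ j → v (σ j) ≤ v (σ i)) :
    sSup {s : ℝ | ∃ z : Fin n → ℝ, (∀ i, 0 ≤ z i ∧ z i ≤ 1) ∧ (∑ i, z i) ≤ t ∧
        s = ∑ i, v i * z i}
      = (∑ j : Fin n, if (j : ℕ) < ⌊t⌋₊ then v (σ j) else 0)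
        + (t - ⌊t⌋₊) * v (σ ⟨⌊t⌋₊, hfloor⟩) := by
  set m : ℕ := ⌊t⌋₊ with hm
  set mhat : Fin n := ⟨m, hfloor⟩ with hmhat
  set c : Fin n → ℝ := fun j => if (j : ℕ) < m then 1 else if (j : ℕ) = m then t - m else 0
    with hc
  have hθ0 : 0 ≤ t - m := sub_nonneg.2 (Nat.floor_le ht)
  have hθ1 : t - m ≤ 1 := by
    have := Nat.lt_floor_add_one t
    push_cast at this ⊢
    linarith
  -- sum of c equals t
  have hsum_c : ∑ j : Fin n, c j = t := by
    have h1 : ∀ j : Fin n, c j =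
        (if (j : ℕ) < m then (1:ℝ) else 0) + (if j = mhat then t - m else 0) := by
      intro j
      simp only [hc, Fin.ext_iff, hmhat]
      split_ifs with h h' <;> simp_all <;> omega
    rw [Finset.sum_congr rfl fun j _ => h1 j, Finset.sum_add_distrib]
    rw [Finset.sum_ite_eq' Finset.univ mhat (fun _ => t - m),
      if_pos (Finset.mem_univ mhat)]
    have h2 : ∑ j : Fin n, (if (j : ℕ) < m then (1:ℝ) else 0) = m := by
      rw [Fin.sum_univ_eq_sum_range (fun j => if j < m then (1:ℝ) else 0)]
      rw [← Finset.sum_subset (Finset.range_subset_range.2 hfloor.le)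
        (fun x _ hx => by simp [Finset.mem_range] at hx ⊢; omega)]
      have hcon : ∀ x ∈ Finset.range m, (if x < m then (1:ℝ) else 0) = 1 := fun x hx => by
        simp [Finset.mem_range] at hx; simp [hx]
      rw [Finset.sum_congr rfl hcon]
      simp
    rw [h2]; ring
  have hc_bounds : ∀ j, 0 ≤ c j ∧ c j ≤ 1 := by
    intro j
    simp only [hc]
    split_ifs <;> constructor <;> linarith
  -- the target value, expressed as ∑ v(σ j) * c j
  have hRHS : ∑ j : Fin n, v (σ j) * c j =
      (∑ j : Fin n, if (j : ℕ) < m then v (σ j) else 0) + (t - m) * v (σ mhat) := by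
    have h1 : ∀ j : Fin n, v (σ j) * c j =
        (if (j : ℕ) < m then v (σ j) else 0) + (if j = mhat then (t - m) * v (σ j) else 0) := by
      intro j
      simp only [hc, Fin.ext_iff, hmhat]
      split_ifs with h h' <;> first | omega | ring
    rw [Finset.sum_congr rfl fun j _ => h1 j, Finset.sum_add_distrib,
      Finset.sum_ite_eq' Finset.univ mhat (fun j => (t - m) * v (σ j))]
    simp
  -- key inequality
  have key : ∀ w : Fin n → ℝ, (∀ j, 0 ≤ w j ∧ w j ≤ 1) → (∑ j, w j) ≤ t →
      ∑ j : Fin n, v (σ j) * w j ≤ ∑ j : Fin n, v (σ j) * c j := by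
    intro w hw hws
    have step : ∀ j : Fin n, v (σ j) * w j - v (σ j) * c j ≤ v (σ mhat) * (w j - c j) := by
      intro j
      rcases lt_trichotomy (j : ℕ) m with h | h | h
      · have hle : v (σ mhat) ≤ v (σ j) := hσ j mhat (by show (j:ℕ) ≤ m; omega)
        have hcj : c j = 1 := by simp [hc, h]
        have := (hw j).2
        nlinarith
      · have hj : j = mhat := by simp [hmhat, Fin.ext_iff, h]
        rw [hj]; ring_nf; rfl
      · have hle : v (σ j) ≤ v (σ mhat) := hσ mhat j (by rw [Fin.le_def]; exact h.le)
        have hcj : c j = 0 := by simp only [hc]; split_ifs <;> first | rfl | omega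
        have := (hw j).1
        nlinarith
    have h1 : ∑ j : Fin n, (v (σ j) * w j - v (σ j) * c j) ≤
        ∑ j : Fin n, v (σ mhat) * (w j - c j) := Finset.sum_le_sum fun j _ => step j
    have h2 : ∑ j : Fin n, v (σ mhat) * (w j - c j) = v (σ mhat) * ((∑ j, w j) - t) := by
      rw [← Finset.mul_sum, Finset.sum_sub_distrib, hsum_c]
    have h3 : v (σ mhat) * ((∑ j, w j) - t) ≤ 0 :=
      mul_nonpos_of_nonneg_of_nonpos (hv _) (by linarith)
    have h4 : ∑ j : Fin n, (v (σ j) * w j - v (σ j) * c j)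
        = (∑ j : Fin n, v (σ j) * w j) - ∑ j : Fin n, v (σ j) * c j :=
      Finset.sum_sub_distrib _ _
    linarith [h1.trans (h2 ▸ h3)]
  set S : Set ℝ := {s : ℝ | ∃ z : Fin n → ℝ, (∀ i, 0 ≤ z i ∧ z i ≤ 1) ∧ (∑ i, z i) ≤ t ∧
      s = ∑ i, v i * z i} with hS
  -- membership of the target value
  have hmem : ((∑ j : Fin n, if (j : ℕ) < m then v (σ j) else 0) + (t - m) * v (σ mhat)) ∈ S := by
    refine ⟨fun i => c (σ.symm i), fun i => hc_bounds _, ?_, ?_⟩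
    · rw [Equiv.sum_comp σ.symm c, hsum_c]
    · rw [← hRHS, ← Equiv.sum_comp σ (fun i => v i * c (σ.symm i))]
      simp
  -- upper bound
  have hub : ∀ s ∈ S, s ≤ (∑ j : Fin n, if (j : ℕ) < m then v (σ j) else 0)
      + (t - m) * v (σ mhat) := by
    rintro s ⟨z, hz, hzs, rfl⟩
    rw [← hRHS, ← Equiv.sum_comp σ (fun i => v i * z i)]
    exact key (fun j => z (σ j)) (fun j => hz _) (by rw [Equiv.sum_comp σ z]; exact hzs)
  exact le_antisymm (csSup_le ⟨_, hmem⟩ hub) (le_csSup ⟨_, hub⟩ hmem)
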